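/- arXiv:1205.6536 — 2 statements merged into one kernel-verified Lean document; each statement's English description precedes it below -/
import Mathlib

section
/- Let A ∈ ℂ^{n×n} have eigenvalue λ₀ with algebraic multiplicity 2k and geometric multiplicity 1, with left and right Jordan chains u₁,…,u_{2k} and v₁,…,v_{2k}. Set U = [u₁ … u_k], V = [v₁ … v_k], and let R* ∈ ℂ^{k×n}, L ∈ ℂ^{n×k} satisfy R*V = U*L = I_k. Then for Â = A + (λ₁ − λ₀)·(V R* + L U*), the characteristic polynomial of Â equals that of A multiplied by ((λ₁ − x)/(λ₀ − x))^{2k}; i.e., the eigenvalues of Â are those of A with the 2k copies of λ₀ replaced by 2k copies of λ₁. -/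
open Matrix Polynomial

/-- Matrix whose columns are the chain vectors `w 1, …, w k`. -/
def chainMat {n : ℕ} (k : ℕ) (w : ℕ → Fin n → ℂ) : Matrix (Fin n) (Fin k) ℂ :=
  Matrix.of fun s i => w ((i : ℕ) + 1) s

/-- nilpotent Jordan shift (superdiagonal ones) -/
def Jm (k : ℕ) : Matrix (Fin k) (Fin k) ℂ :=
  Matrix.of fun i j => if (i : ℕ) + 1 = (j : ℕ) then 1 else 0

lemma det_smul_one_sub_Jm {k : ℕ} (a : ℂ) :
    (a • (1 : Matrix (Fin k) (Fin k) ℂ) - Jm k).det = a ^ k := by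
  have h : (a • (1 : Matrix (Fin k) (Fin k) ℂ) - Jm k).BlockTriangular id := by
    intro i j hij
    replace hij : (j : ℕ) < (i : ℕ) := hij
    simp only [Matrix.sub_apply, Matrix.smul_apply, Matrix.one_apply, Jm, Matrix.of_apply]
    have h1 : i ≠ j := Fin.ne_of_val_ne (by omega)
    have h2 : ¬ ((i : ℕ) + 1 = (j : ℕ)) := by omega
    simp [h1, h2]
  rw [Matrix.det_of_upperTriangular h]
  have : ∀ i : Fin k, (a • (1 : Matrix (Fin k) (Fin k) ℂ) - Jm k) i i = a := by
    intro i; simp [Jm]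
  simp [this]

lemma eval_charpoly' {n : ℕ} (M : Matrix (Fin n) (Fin n) ℂ) (x : ℂ) :
    (M.charpoly).eval x = (x • (1 : Matrix (Fin n) (Fin n) ℂ) - M).det := by
  rw [Matrix.charpoly, ← Polynomial.coe_evalRingHom, RingHom.map_det]
  congr 1
  ext i j
  by_cases h : i = j <;>
    simp [charmatrix_apply, h, Matrix.one_apply, Matrix.diagonal_apply]

section chains
variable {n k : ℕ} (A : Matrix (Fin n) (Fin n) ℂ) (lam0 : ℂ) (u v : ℕ → Fin n → ℂ)

lemma chain_AV (hk : 1 ≤ k)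
    (hv1 : A.mulVec (v 1) = lam0 • v 1)
    (hvS : ∀ j, 1 ≤ j → j + 1 ≤ 2 * k →
      A.mulVec (v (j + 1)) = lam0 • v (j + 1) + v j) :
    A * chainMat k v = lam0 • chainMat k v + chainMat k v * Jm k := by
  ext s i
  have hL : (A * chainMat k v) s i = A.mulVec (v ((i : ℕ) + 1)) s := by
    simp [Matrix.mul_apply, Matrix.mulVec, dotProduct, chainMat]
  rcases i with ⟨i, hi⟩
  match i with
  | 0 =>
    have hsum : (chainMat k v * Jm k) s ⟨0, hi⟩ = 0 := by
      simp only [Matrix.mul_apply, Jm, Matrix.of_apply]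
      apply Finset.sum_eq_zero
      intro j _
      simp
    rw [hL]
    simp only [Matrix.add_apply, Matrix.smul_apply]
    rw [hsum, hv1]
    simp [chainMat]
  | m + 1 =>
    have hm : m < k := by omega
    have hsum : (chainMat k v * Jm k) s ⟨m + 1, hi⟩ = v (m + 1) s := by
      simp only [Matrix.mul_apply, Jm, Matrix.of_apply, chainMat]
      rw [Finset.sum_eq_single (⟨m, hm⟩ : Fin k)]
      · simp
      · intro j _ hj
        have : ¬ ((j : ℕ) + 1 = m + 1) := by
          intro h; apply hj; apply Fin.ext; simp; omega
        simp [this]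
        intro h; exact absurd h (by omega)
      · simp
    rw [hL]
    simp only [Matrix.add_apply, Matrix.smul_apply]
    rw [hsum, hvS (m + 1) (by omega) (by omega)]
    simp [chainMat]

lemma chain_UA (hk : 1 ≤ k)
    (hu1 : Matrix.vecMul (star (u 1)) A = lam0 • star (u 1))
    (huS : ∀ i, 1 ≤ i → i + 1 ≤ 2 * k →
      Matrix.vecMul (star (u (i + 1))) A = lam0 • star (u (i + 1)) + star (u i)) :
    (chainMat k u)ᴴ * A = lam0 • (chainMat k u)ᴴ + (Jm k)ᵀ * (chainMat k u)ᴴ := by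
  ext i t
  have hL : ((chainMat k u)ᴴ * A) i t = Matrix.vecMul (star (u ((i : ℕ) + 1))) A t := by
    simp [Matrix.mul_apply, Matrix.vecMul, dotProduct, chainMat, conjTranspose_apply,
      Pi.star_apply]
  rcases i with ⟨i, hi⟩
  match i with
  | 0 =>
    have hsum : ((Jm k)ᵀ * (chainMat k u)ᴴ) ⟨0, hi⟩ t = 0 := by
      simp only [Matrix.mul_apply, Jm, Matrix.transpose_apply, Matrix.of_apply]
      apply Finset.sum_eq_zero
      intro j _
      simp
    rw [hL]
    simp only [Matrix.add_apply, Matrix.smul_apply]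
    rw [hsum, hu1]
    simp [chainMat, conjTranspose_apply, Pi.star_apply]
  | m + 1 =>
    have hm : m < k := by omega
    have hsum : ((Jm k)ᵀ * (chainMat k u)ᴴ) ⟨m + 1, hi⟩ t = star (u (m + 1)) t := by
      simp only [Matrix.mul_apply, Jm, Matrix.transpose_apply, Matrix.of_apply, chainMat,
        conjTranspose_apply]
      rw [Finset.sum_eq_single (⟨m, hm⟩ : Fin k)]
      · simp
      · intro j _ hj
        have : ¬ ((j : ℕ) + 1 = m + 1) := by
          intro h; apply hj; apply Fin.ext; simp; omega
        simp [this]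
        intro h; exact absurd h (by omega)
      · simp
    rw [hL]
    simp only [Matrix.add_apply, Matrix.smul_apply]
    rw [hsum, huS (m + 1) (by omega) (by omega)]
    simp [chainMat, conjTranspose_apply, Pi.star_apply]

lemma chain_ortho (hk : 1 ≤ k)
    (hu1 : Matrix.vecMul (star (u 1)) A = lam0 • star (u 1))
    (huS : ∀ i, 1 ≤ i → i + 1 ≤ 2 * k →
      Matrix.vecMul (star (u (i + 1))) A = lam0 • star (u (i + 1)) + star (u i))
    (hv1 : A.mulVec (v 1) = lam0 • v 1)
    (hvS : ∀ j, 1 ≤ j → j + 1 ≤ 2 * k →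
      A.mulVec (v (j + 1)) = lam0 • v (j + 1) + v j) :
    ∀ q p, 1 ≤ p → 1 ≤ q → p + q ≤ 2 * k → star (u p) ⬝ᵥ v q = 0 := by
  intro q
  induction q with
  | zero => intro p _ hq _; omega
  | succ q ih =>
    intro p hp hq hpq
    have hup : star (u p) = Matrix.vecMul (star (u (p + 1))) A - lam0 • star (u (p + 1)) := by
      rw [huS p hp (by omega)]; abel
    rcases Nat.eq_or_lt_of_le hq with hq1 | hq2
    · -- q + 1 = 1, i.e. q = 0
      have hq0 : q = 0 := by omega
      subst hq0
      rw [hup, sub_dotProduct, ← Matrix.dotProduct_mulVec, hv1,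
        dotProduct_smul, smul_dotProduct]
      ring_nf
    · have hq' : 1 ≤ q := by omega
      rw [hup, sub_dotProduct, ← Matrix.dotProduct_mulVec,
        hvS q hq' (by omega), dotProduct_add,
        dotProduct_smul, smul_dotProduct,
        ih (p + 1) (by omega) hq' (by omega)]
      ring

lemma chain_UV (hk : 1 ≤ k)
    (hu1 : Matrix.vecMul (star (u 1)) A = lam0 • star (u 1))
    (huS : ∀ i, 1 ≤ i → i + 1 ≤ 2 * k →
      Matrix.vecMul (star (u (i + 1))) A = lam0 • star (u (i + 1)) + star (u i))
    (hv1 : A.mulVec (v 1) = lam0 • v 1)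
    (hvS : ∀ j, 1 ≤ j → j + 1 ≤ 2 * k →
      A.mulVec (v (j + 1)) = lam0 • v (j + 1) + v j) :
    (chainMat k u)ᴴ * chainMat k v = 0 := by
  ext i j
  have : ((chainMat k u)ᴴ * chainMat k v) i j = star (u ((i : ℕ) + 1)) ⬝ᵥ v ((j : ℕ) + 1) := by
    simp [Matrix.mul_apply, dotProduct, chainMat, conjTranspose_apply, Pi.star_apply]
  rw [this, chain_ortho A lam0 u v hk hu1 huS hv1 hvS ((j : ℕ) + 1) ((i : ℕ) + 1)
    (by omega) (by omega) (by omega)]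
  simp
end chains

theorem key_point {n k : ℕ} (A : Matrix (Fin n) (Fin n) ℂ) (lam0 lam1 x : ℂ)
    (V L : Matrix (Fin n) (Fin k) ℂ) (R' W : Matrix (Fin k) (Fin n) ℂ)
    (hAV : A * V = lam0 • V + V * Jm k)
    (hWA : W * A = lam0 • W + (Jm k)ᵀ * W)
    (hWV : W * V = 0)
    (hRV : R' * V = 1)
    (hWL : W * L = 1)
    (hx : x ≠ lam0)
    (hdet : IsUnit (x • (1 : Matrix (Fin n) (Fin n) ℂ) - A).det) :
    (x • (1 : Matrix (Fin n) (Fin n) ℂ) - (A + (lam1 - lam0) • (V * R' + L * W))).det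
        * (x - lam0) ^ (2 * k)
      = (x • (1 : Matrix (Fin n) (Fin n) ℂ) - A).det * (x - lam1) ^ (2 * k) := by
  set c : ℂ := lam1 - lam0 with hc
  set B : Matrix (Fin n) (Fin n) ℂ := x • 1 - A with hB
  set S : Matrix (Fin k) (Fin k) ℂ := (x - lam0) • 1 - Jm k with hS
  set T : Matrix (Fin k) (Fin k) ℂ := (x - lam0) • 1 - (Jm k)ᵀ with hT
  have hSdet : S.det = (x - lam0) ^ k := det_smul_one_sub_Jm _
  have hTdet : T.det = (x - lam0) ^ k := by
    have : T = ((x - lam0) • (1 : Matrix (Fin k) (Fin k) ℂ) - Jm k)ᵀ := by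
      rw [Matrix.transpose_sub, Matrix.transpose_smul, Matrix.transpose_one]
    rw [this, Matrix.det_transpose, det_smul_one_sub_Jm]
  have hxne : (x - lam0) ≠ 0 := sub_ne_zero.mpr hx
  have hSu : IsUnit S.det := by rw [hSdet]; exact (pow_ne_zero _ hxne).isUnit
  have hTu : IsUnit T.det := by rw [hTdet]; exact (pow_ne_zero _ hxne).isUnit
  -- intertwining relations
  have hBV : B * V = V * S := by
    rw [hB, hS, Matrix.sub_mul, Matrix.mul_sub, hAV, Matrix.smul_mul, Matrix.one_mul,
      Matrix.mul_smul, Matrix.mul_one, sub_smul]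
    abel
  have hWB : W * B = T * W := by
    rw [hB, hT, Matrix.mul_sub, Matrix.sub_mul, hWA, Matrix.mul_smul, Matrix.mul_one,
      Matrix.smul_mul, Matrix.one_mul, sub_smul]
    abel
  have hBiB : B⁻¹ * B = 1 := Matrix.nonsing_inv_mul _ hdet
  have hBBi : B * B⁻¹ = 1 := Matrix.mul_nonsing_inv _ hdet
  have hSSi : S * S⁻¹ = 1 := Matrix.mul_nonsing_inv _ hSu
  have hSiS : S⁻¹ * S = 1 := Matrix.nonsing_inv_mul _ hSu
  have hTTi : T * T⁻¹ = 1 := Matrix.mul_nonsing_inv _ hTu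
  have hTiT : T⁻¹ * T = 1 := Matrix.nonsing_inv_mul _ hTu
  have hBiV : B⁻¹ * V = V * S⁻¹ := by
    calc B⁻¹ * V = B⁻¹ * (V * S * S⁻¹) := by rw [Matrix.mul_assoc V S, hSSi, Matrix.mul_one]
    _ = B⁻¹ * (B * V * S⁻¹) := by rw [hBV]
    _ = B⁻¹ * B * V * S⁻¹ := by simp only [Matrix.mul_assoc]
    _ = V * S⁻¹ := by rw [hBiB, Matrix.one_mul]
  have hWBi : W * B⁻¹ = T⁻¹ * W := by
    calc W * B⁻¹ = T⁻¹ * (T * W) * B⁻¹ := by rw [← Matrix.mul_assoc, hTiT, Matrix.one_mul]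
    _ = T⁻¹ * (W * B) * B⁻¹ := by rw [hWB]
    _ = T⁻¹ * (W * (B * B⁻¹)) := by simp only [Matrix.mul_assoc]
    _ = T⁻¹ * W := by rw [hBBi, Matrix.mul_one]
  -- main factorization
  have keyfac : x • (1 : Matrix (Fin n) (Fin n) ℂ) - (A + c • (V * R' + L * W))
      = B * (1 + (B⁻¹ * fromCols V L) * ((-c) • fromRows R' W)) := by
    have e1 : B⁻¹ * fromCols V L * ((-c) • fromRows R' W)
        = (-c) • (B⁻¹ * (fromCols V L * fromRows R' W)) := by
      rw [Matrix.mul_smul, Matrix.mul_assoc]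
    rw [e1, Matrix.mul_add, Matrix.mul_one, Matrix.mul_smul, ← Matrix.mul_assoc, hBBi,
      Matrix.one_mul, fromCols_mul_fromRows, neg_smul, hB]
    abel
  rw [keyfac, Matrix.det_mul, Matrix.det_one_add_mul_comm]
  -- compute the small determinant
  have hcols : B⁻¹ * fromCols V L = fromCols (V * S⁻¹) (B⁻¹ * L) := by
    rw [Matrix.mul_fromCols, hBiV]
  have hblocks : fromRows R' W * fromCols (V * S⁻¹) (B⁻¹ * L)
      = fromBlocks S⁻¹ (R' * (B⁻¹ * L)) 0 T⁻¹ := by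
    rw [Matrix.fromRows_mul_fromCols, ← Matrix.mul_assoc R' V S⁻¹, hRV, Matrix.one_mul,
      ← Matrix.mul_assoc W V S⁻¹, hWV, Matrix.zero_mul, ← Matrix.mul_assoc W B⁻¹ L, hWBi,
      Matrix.mul_assoc T⁻¹ W L, hWL, Matrix.mul_one]
  have hmat : (1 : Matrix (Fin k ⊕ Fin k) (Fin k ⊕ Fin k) ℂ)
        + ((-c) • fromRows R' W) * (B⁻¹ * fromCols V L)
      = fromBlocks (1 + (-c) • S⁻¹) ((-c) • (R' * (B⁻¹ * L))) 0 (1 + (-c) • T⁻¹) := by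
    rw [hcols, Matrix.smul_mul, hblocks, ← Matrix.fromBlocks_one, Matrix.fromBlocks_smul,
      Matrix.fromBlocks_add]
    simp only [smul_zero, add_zero, zero_add]
  rw [hmat, Matrix.det_fromBlocks_zero₂₁]
  have hscal : (x - lam0) - c = x - lam1 := by rw [hc]; ring
  -- final computation
  have h1 : (1 + (-c) • S⁻¹).det * S.det = (x - lam1) ^ k := by
    rw [← Matrix.det_mul, Matrix.add_mul, Matrix.one_mul, Matrix.smul_mul, hSiS,
      neg_smul, ← sub_eq_add_neg]
    have : S - c • (1 : Matrix (Fin k) (Fin k) ℂ)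
        = (x - lam1) • (1 : Matrix (Fin k) (Fin k) ℂ) - Jm k := by
      rw [hS, sub_right_comm, ← sub_smul, hscal]
    rw [this, det_smul_one_sub_Jm]
  have h2 : (1 + (-c) • T⁻¹).det * T.det = (x - lam1) ^ k := by
    rw [← Matrix.det_mul, Matrix.add_mul, Matrix.one_mul, Matrix.smul_mul, hTiT,
      neg_smul, ← sub_eq_add_neg]
    have : T - c • (1 : Matrix (Fin k) (Fin k) ℂ)
        = ((x - lam1) • (1 : Matrix (Fin k) (Fin k) ℂ) - Jm k)ᵀ := by
      rw [Matrix.transpose_sub, Matrix.transpose_smul, Matrix.transpose_one,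
        hT, sub_right_comm, ← sub_smul, hscal]
    rw [this, Matrix.det_transpose, det_smul_one_sub_Jm]
  have hpow : (x - lam0) ^ (2 * k) = S.det * T.det := by
    rw [hSdet, hTdet, ← pow_add, two_mul]
  rw [hpow]
  calc B.det * ((1 + (-c) • S⁻¹).det * (1 + (-c) • T⁻¹).det) * (S.det * T.det)
      = B.det * (((1 + (-c) • S⁻¹).det * S.det) * ((1 + (-c) • T⁻¹).det * T.det)) := by ring
    _ = B.det * ((x - lam1) ^ k * (x - lam1) ^ k) := by rw [h1, h2]
    _ = B.det * (x - lam1) ^ (2 * k) := by rw [← pow_add, two_mul]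

/-- Even-multiplicity shift: the rank-`2k` update replaces the `2k` copies of
`λ₀` by `2k` copies of `λ₁` in the characteristic polynomial. -/
theorem even_shift_charpoly {n k : ℕ}
    (A : Matrix (Fin n) (Fin n) ℂ) (lam0 lam1 : ℂ)
    (u v : ℕ → Fin n → ℂ)
    (hk : 1 ≤ k)
    (halg : (Matrix.charpoly A).rootMultiplicity lam0 = 2 * k)
    (hgeo : Module.finrank ℂ
      ↥(LinearMap.ker ((A - lam0 • (1 : Matrix (Fin n) (Fin n) ℂ)).mulVecLin)) = 1)
    (hu0 : u 1 ≠ 0) (hv0 : v 1 ≠ 0)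
    (hu1 : Matrix.vecMul (star (u 1)) A = lam0 • star (u 1))
    (huS : ∀ i, 1 ≤ i → i + 1 ≤ 2 * k →
      Matrix.vecMul (star (u (i + 1))) A = lam0 • star (u (i + 1)) + star (u i))
    (hv1 : A.mulVec (v 1) = lam0 • v 1)
    (hvS : ∀ j, 1 ≤ j → j + 1 ≤ 2 * k →
      A.mulVec (v (j + 1)) = lam0 • v (j + 1) + v j)
    (R L : Matrix (Fin n) (Fin k) ℂ)
    (hR : Rᴴ * chainMat k v = 1)
    (hL : (chainMat k u)ᴴ * L = 1) :
    (A + (lam1 - lam0) • (chainMat k v * Rᴴ + L * (chainMat k u)ᴴ)).charpoly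
        * (X - C lam0) ^ (2 * k)
      = A.charpoly * (X - C lam1) ^ (2 * k) := by
  apply Polynomial.eq_of_infinite_eval_eq
  have hfin : ({x : ℂ | IsRoot A.charpoly x} ∪ {lam0}).Finite :=
    (Polynomial.finite_setOf_isRoot (A.charpoly_monic.ne_zero)).union (Set.finite_singleton _)
  apply (hfin.infinite_compl).mono
  intro x hx
  simp only [Set.mem_compl_iff, Set.mem_union, Set.mem_setOf_eq, Set.mem_singleton_iff,
    not_or] at hx
  obtain ⟨hroot, hxl0⟩ := hx
  simp only [Set.mem_setOf_eq, eval_mul, eval_pow, eval_sub, eval_X, eval_C,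
    eval_charpoly']
  have hdet : IsUnit (x • (1 : Matrix (Fin n) (Fin n) ℂ) - A).det := by
    rw [← eval_charpoly']
    exact isUnit_iff_ne_zero.mpr hroot
  exact key_point A lam0 lam1 x (chainMat k v) L Rᴴ (chainMat k u)ᴴ
    (chain_AV A lam0 v hk hv1 hvS)
    (chain_UA A lam0 u hk hu1 huS)
    (chain_UV A lam0 u v hk hu1 huS hv1 hvS)
    hR hL hxl0 hdet
end

section
/- With the odd-multiplicity shift setup (Â = A + (λ₁ − λ₀)(VR* + v_{k+1}r* + LU*), r = u_{k+1}/(v_{k+1}*u_{k+1}), R*V = U*L = I_k), the shifted matrix satisfies ÂV = V·J_k(λ₁) and U*Â = J_k(λ₁)ᵀ·U*; in particular Âv₁ = λ₁v₁ and Âv_{i+1} = λ₁v_{i+1} + v_i for 1 ≤ i ≤ k−1. -/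
open Matrix

/-- The `k × k` Jordan block with eigenvalue `x`. -/
def jordanBlock (k : ℕ) (x : ℂ) : Matrix (Fin k) (Fin k) ℂ :=
  Matrix.of fun i j => if i = j then x else if (i : ℕ) + 1 = (j : ℕ) then 1 else 0

private lemma sum_shift {k : ℕ} (f : Fin k → ℂ) (j : Fin k) :
    (∑ t : Fin k, if (t : ℕ) + 1 = (j : ℕ) then f t else 0)
      = if h : (j : ℕ) = 0 then 0 else f ⟨(j : ℕ) - 1, by omega⟩ := by
  split_ifs with h
  · apply Finset.sum_eq_zero; intro t _
    rw [if_neg (by omega)]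
  · rw [Finset.sum_eq_single (⟨(j : ℕ) - 1, by omega⟩ : Fin k)]
    · rw [if_pos (by simp; omega)]
    · intro t _ ht
      rw [if_neg]
      intro hc
      exact ht (Fin.ext (by simp; omega))
    · intro hmem; exact absurd (Finset.mem_univ _) hmem

/-- Entry of `M * jordanBlock k x`. -/
private lemma mul_jordan_apply {m : Type*} {k : ℕ} (M : Matrix m (Fin k) ℂ) (x : ℂ)
    (s : m) (j : Fin k) :
    (M * jordanBlock k x) s j
      = x * M s j + if h : (j : ℕ) = 0 then 0 else M s ⟨(j : ℕ) - 1, by omega⟩ := by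
  rw [Matrix.mul_apply]
  have : ∀ t : Fin k, M s t * jordanBlock k x t j
      = (if t = j then x * M s j else 0) + (if (t : ℕ) + 1 = (j : ℕ) then M s t else 0) := by
    intro t
    simp only [jordanBlock, Matrix.of_apply]
    by_cases h1 : t = j
    · subst h1; rw [if_pos rfl, if_pos rfl, if_neg (by omega)]; ring
    · rw [if_neg h1, if_neg h1]
      by_cases h2 : (t : ℕ) + 1 = (j : ℕ)
      · rw [if_pos h2, if_pos h2]; ring
      · rw [if_neg h2, if_neg h2]; ring
  rw [Finset.sum_congr rfl (fun t _ => this t), Finset.sum_add_distrib,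
    Finset.sum_ite_eq' Finset.univ j (fun _ => x * M s j), if_pos (Finset.mem_univ j),
    sum_shift]

private lemma jordan_shift (k : ℕ) (x y : ℂ) :
    jordanBlock k y = jordanBlock k x + (y - x) • (1 : Matrix (Fin k) (Fin k) ℂ) := by
  ext i j
  simp only [jordanBlock, Matrix.add_apply, Matrix.smul_apply, Matrix.one_apply,
    Matrix.of_apply, smul_eq_mul]
  by_cases h : i = j
  · simp [h]
  · simp [h]

/-- Odd-multiplicity shift: the first half of the left and right Jordan chains
are preserved, now as chains for `λ₁`: `ÂV = V J_k(λ₁)` and `U*Â = J_k(λ₁)ᵀ U*`. -/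
theorem odd_shift_chains {n k : ℕ}
    (A : Matrix (Fin n) (Fin n) ℂ) (lam0 lam1 : ℂ)
    (u v : ℕ → Fin n → ℂ)
    (hk : 1 ≤ k)
    (halg : (Matrix.charpoly A).rootMultiplicity lam0 = 2 * k + 1)
    (hgeo : Module.finrank ℂ
      ↥(LinearMap.ker ((A - lam0 • (1 : Matrix (Fin n) (Fin n) ℂ)).mulVecLin)) = 1)
    (hu0 : u 1 ≠ 0) (hv0 : v 1 ≠ 0)
    (hu1 : Matrix.vecMul (star (u 1)) A = lam0 • star (u 1))
    (huS : ∀ i, 1 ≤ i → i + 1 ≤ 2 * k + 1 →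
      Matrix.vecMul (star (u (i + 1))) A = lam0 • star (u (i + 1)) + star (u i))
    (hv1 : A.mulVec (v 1) = lam0 • v 1)
    (hvS : ∀ j, 1 ≤ j → j + 1 ≤ 2 * k + 1 →
      A.mulVec (v (j + 1)) = lam0 • v (j + 1) + v j)
    (R L : Matrix (Fin n) (Fin k) ℂ)
    (hR : Rᴴ * chainMat k v = 1)
    (hL : (chainMat k u)ᴴ * L = 1)
    (r : Fin n → ℂ)
    (hr : r = (dotProduct (star (v (k + 1))) (u (k + 1)))⁻¹ • u (k + 1)) :
    let Ahat := A + (lam1 - lam0) • (chainMat k v * Rᴴ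
        + Matrix.vecMulVec (v (k + 1)) (star r) + L * (chainMat k u)ᴴ)
    Ahat * chainMat k v = chainMat k v * jordanBlock k lam1 ∧
    (chainMat k u)ᴴ * Ahat = (jordanBlock k lam1)ᵀ * (chainMat k u)ᴴ := by
  intro Ahat
  -- Biorthogonality of the chains: ⟪u_i, v_j⟫ = 0 for i + j ≤ 2k+1.
  have key : ∀ i j : ℕ, 1 ≤ i → 1 ≤ j → i + j ≤ 2 * k + 1 →
      dotProduct (star (u i)) (v j) = 0 := by
    intro i
    induction i with
    | zero => intro j h; omega
    | succ m ih =>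
      intro j h1 hj hij
      rcases Nat.eq_zero_or_pos m with hm | hm
      · subst hm
        have e : dotProduct (Matrix.vecMul (star (u 1)) A) (v (j + 1))
            = dotProduct (star (u 1)) (A.mulVec (v (j + 1))) :=
          (Matrix.dotProduct_mulVec _ _ _).symm
        rw [hu1, hvS j hj (by omega)] at e
        simp only [smul_dotProduct, dotProduct_add,
          dotProduct_smul, smul_eq_mul] at e
        linear_combination -e
      · have e : dotProduct (Matrix.vecMul (star (u (m + 1))) A) (v (j + 1))
            = dotProduct (star (u (m + 1))) (A.mulVec (v (j + 1))) :=
          (Matrix.dotProduct_mulVec _ _ _).symm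
        rw [huS m hm (by omega), hvS j hj (by omega)] at e
        simp only [add_dotProduct, smul_dotProduct, dotProduct_add,
          dotProduct_smul, smul_eq_mul] at e
        have := ih (j + 1) hm (by omega) (by omega)
        rw [this] at e
        linear_combination -e
  -- U* V = 0
  have hUV : (chainMat k u)ᴴ * chainMat k v = 0 := by
    ext i j
    have h := key ((i : ℕ) + 1) ((j : ℕ) + 1) (by omega) (by omega)
      (by have := i.isLt; have := j.isLt; omega)
    simpa [Matrix.mul_apply, chainMat, Matrix.conjTranspose_apply,
      dotProduct] using h
  -- (v_{k+1} r*) V = 0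
  have hvecV : Matrix.vecMulVec (v (k + 1)) (star r) * chainMat k v = 0 := by
    ext s j
    have h := key (k + 1) ((j : ℕ) + 1) (by omega) (by omega) (by have := j.isLt; omega)
    have hrv : dotProduct (star r) (v ((j : ℕ) + 1)) = 0 := by
      rw [hr, star_smul, smul_dotProduct, h, smul_zero]
    simp only [Matrix.mul_apply, Matrix.vecMulVec_apply, chainMat, Matrix.of_apply,
      Matrix.zero_apply, Pi.star_apply, mul_assoc, ← Finset.mul_sum]
    simp only [dotProduct, Pi.star_apply] at hrv
    rw [hrv, mul_zero]
  -- U* (v_{k+1} r*) = 0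
  have hUv : (chainMat k u)ᴴ * Matrix.vecMulVec (v (k + 1)) (star r) = 0 := by
    ext i s
    have h := key ((i : ℕ) + 1) (k + 1) (by omega) (by omega) (by have := i.isLt; omega)
    simp only [dotProduct, Pi.star_apply] at h
    simp only [Matrix.mul_apply, Matrix.vecMulVec_apply, chainMat, Matrix.of_apply,
      Matrix.conjTranspose_apply, Matrix.zero_apply, Pi.star_apply]
    calc ∑ t, star (u ((i : ℕ) + 1) t) * (v (k + 1) t * star (r s))
        = (∑ t, star (u ((i : ℕ) + 1) t) * v (k + 1) t) * star (r s) := by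
          rw [Finset.sum_mul]
          exact Finset.sum_congr rfl fun t _ => by ring
      _ = 0 := by rw [h, zero_mul]
  -- A V = V J(λ0)
  have hAV : A * chainMat k v = chainMat k v * jordanBlock k lam0 := by
    ext s j
    rw [mul_jordan_apply]
    have hL1 : (A * chainMat k v) s j = (A.mulVec (v ((j : ℕ) + 1))) s := by
      simp [Matrix.mul_apply, Matrix.mulVec, dotProduct, chainMat]
    by_cases h : (j : ℕ) = 0
    · rw [hL1, dif_pos h, h, hv1]
      simp [chainMat, h]
    · rw [hL1, dif_neg h]
      have e := hvS (j : ℕ) (by omega) (by have := j.isLt; omega)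
      have e2 : A.mulVec (v ((j : ℕ) + 1)) s = lam0 * v ((j : ℕ) + 1) s + v (j : ℕ) s := by
        rw [e]; simp
      rw [e2]
      simp only [chainMat, Matrix.of_apply]
      congr 2
      omega
  -- U* A = J(λ0)ᵀ U*
  have hUA : (chainMat k u)ᴴ * A = (jordanBlock k lam0)ᵀ * (chainMat k u)ᴴ := by
    ext i s
    have hrhs : ((jordanBlock k lam0)ᵀ * (chainMat k u)ᴴ) i s
        = (((chainMat k u)ᴴ)ᵀ * jordanBlock k lam0) s i := by
      rw [show (jordanBlock k lam0)ᵀ * (chainMat k u)ᴴ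
          = ((((chainMat k u)ᴴ)ᵀ) * jordanBlock k lam0)ᵀ by
        rw [Matrix.transpose_mul, Matrix.transpose_transpose]]
      rfl
    rw [hrhs, mul_jordan_apply]
    have hL1 : ((chainMat k u)ᴴ * A) i s = (Matrix.vecMul (star (u ((i : ℕ) + 1))) A) s := by
      simp [Matrix.mul_apply, Matrix.vecMul, dotProduct, chainMat,
        Matrix.conjTranspose_apply]
    by_cases h : (i : ℕ) = 0
    · rw [hL1, dif_pos h, h, hu1]
      simp [chainMat, Matrix.conjTranspose_apply, h]
    · rw [hL1, dif_neg h]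
      have e := huS (i : ℕ) (by omega) (by have := i.isLt; omega)
      have e2 : (Matrix.vecMul (star (u ((i : ℕ) + 1))) A) s
          = lam0 * star (u ((i : ℕ) + 1) s) + star (u (i : ℕ) s) := by
        rw [e]; simp
      rw [e2]
      simp only [chainMat, Matrix.transpose_apply, Matrix.conjTranspose_apply,
        Matrix.of_apply]
      congr 3
      omega
  constructor
  · show (A + (lam1 - lam0) • (chainMat k v * Rᴴ
        + Matrix.vecMulVec (v (k + 1)) (star r) + L * (chainMat k u)ᴴ)) * chainMat k v = _
    rw [Matrix.add_mul, Matrix.smul_mul, Matrix.add_mul, Matrix.add_mul,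
      Matrix.mul_assoc (chainMat k v) Rᴴ, hR, Matrix.mul_one, hvecV,
      Matrix.mul_assoc L, hUV, Matrix.mul_zero, add_zero, add_zero,
      hAV, jordan_shift k lam0 lam1, Matrix.mul_add, Matrix.mul_smul, Matrix.mul_one]
  · show (chainMat k u)ᴴ * (A + (lam1 - lam0) • (chainMat k v * Rᴴ
        + Matrix.vecMulVec (v (k + 1)) (star r) + L * (chainMat k u)ᴴ)) = _
    rw [Matrix.mul_add, Matrix.mul_smul, Matrix.mul_add, Matrix.mul_add,
      ← Matrix.mul_assoc _ (chainMat k v) Rᴴ, hUV, Matrix.zero_mul, hUv,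
      ← Matrix.mul_assoc _ L, hL, Matrix.one_mul, zero_add, zero_add,
      hUA, jordan_shift k lam0 lam1, Matrix.transpose_add, Matrix.add_mul,
      Matrix.transpose_smul, Matrix.smul_mul, Matrix.transpose_one, Matrix.one_mul]
end
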